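/- Let G be a connected finite simple graph on [d] and suppose the edge e = {i,j} of G (with a chosen orientation from i to j) is not a bridge. Let P_e be the convex hull of A(G) ∖ {e_i − e_j}, where A(G) = {±(e_k − e_l) : {k,l} ∈ E(G)}. Then h*(P_e, x) = (1/2) · ( h*(A_G, x) + h*(A_{G∖e}, x) ), where G∖e is the graph obtained by deleting the edge e from G. -/

import Mathlib

open scoped Pointwise
open Polynomial

namespace ABP

variable {V : Type*}

/-- A point of `ℝ^V` all of whose coordinates are integers. -/
def IsLatticePoint (x : V → ℝ) : Prop := ∀ i, ∃ z : ℤ, x i = (z : ℝ)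

/-- A lattice polytope: the convex hull of finitely many lattice points. -/
def IsLatticePolytope [Fintype V] (P : Set (V → ℝ)) : Prop :=
  ∃ S : Finset (V → ℝ), (∀ v ∈ S, IsLatticePoint v) ∧ P = convexHull ℝ (S : Set (V → ℝ))

/-- The dimension of a polytope, as the rank of its vector span. -/
noncomputable def polyDim [Fintype V] (P : Set (V → ℝ)) : ℕ :=
  Module.finrank ℝ (vectorSpan ℝ P)

/-- The number of lattice points of the `m`-th dilate of `P`. -/
noncomputable def latticeCount [Fintype V] (P : Set (V → ℝ)) (m : ℕ) : ℕ :=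
  Set.ncard {x : V → ℤ | (fun i => (x i : ℝ)) ∈ (m : ℝ) • P}

/-- `h` is the `h^*`-polynomial of the lattice polytope `P`:
`(1 + ∑_{m≥1} L_P(m) x^m) · (1-x)^{dim P + 1} = h` as formal power series. -/
def IsHStar [Fintype V] (P : Set (V → ℝ)) (h : Polynomial ℝ) : Prop :=
  (PowerSeries.mk fun m => if m = 0 then (1 : ℝ) else (latticeCount P m : ℝ)) *
      (1 - PowerSeries.X) ^ (polyDim P + 1) = (h : PowerSeries ℝ)

/-- `f` is γ-positive: `f = ∑ γ_i x^i (1+x)^{deg f - 2i}` with all `γ_i ≥ 0`. -/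
def GammaPositive (f : Polynomial ℝ) : Prop :=
  ∃ γ : ℕ → ℝ, (∀ i, 0 ≤ γ i) ∧
    f = ∑ i ∈ Finset.range (f.natDegree / 2 + 1),
      Polynomial.C (γ i) * Polynomial.X ^ i * (1 + Polynomial.X) ^ (f.natDegree - 2 * i)

/-- A real polynomial is real-rooted if all of its complex roots are real. -/
def RealRooted (f : Polynomial ℝ) : Prop :=
  ∀ z : ℂ, (f.map (algebraMap ℝ ℂ)).IsRoot z → z.im = 0

/-- The `±1`-vector associated to `ε : V → Bool`. -/
def signVec (ε : V → Bool) : V → ℝ := fun i => if ε i then 1 else -1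

/-- The unconditional set `P^± = {εx : ε ∈ {-1,1}^V, x ∈ P}`. -/
def uncond (P : Set (V → ℝ)) : Set (V → ℝ) :=
  {y | ∃ (ε : V → Bool) (x : V → ℝ), x ∈ P ∧ y = signVec ε * x}

/-- The closed orthant `ℝ^V_ε`. -/
def orthant (ε : V → Bool) : Set (V → ℝ) := {x | ∀ i, 0 ≤ signVec ε i * x i}

/-- Anti-blocking set: contained in the nonnegative orthant and downward closed there. -/
def IsAntiBlocking (P : Set (V → ℝ)) : Prop :=
  (∀ x ∈ P, ∀ i, 0 ≤ x i) ∧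
    ∀ y ∈ P, ∀ x : V → ℝ, (∀ i, 0 ≤ x i ∧ x i ≤ y i) → x ∈ P

/-- Locally anti-blocking (full-dimensional) lattice polytope. -/
def LocallyAntiBlocking [Fintype V] (P : Set (V → ℝ)) : Prop :=
  ∀ ε : V → Bool, ∃ Q : Set (V → ℝ), IsLatticePolytope Q ∧ IsAntiBlocking Q ∧
    polyDim Q = Fintype.card V ∧ P ∩ orthant ε = uncond Q ∩ orthant ε

/-- The dual (polar) body of `P`. -/
def dualPoly [Fintype V] (P : Set (V → ℝ)) : Set (V → ℝ) :=
  {y | ∀ x ∈ P, ∑ i, x i * y i ≤ 1}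

/-- `P` is a reflexive polytope. -/
def IsReflexive [Fintype V] (P : Set (V → ℝ)) : Prop :=
  IsLatticePolytope P ∧ (0 : V → ℝ) ∈ interior P ∧ IsLatticePolytope (dualPoly P)

/-- The `i`-th unit coordinate vector. -/
def unitVec [DecidableEq V] (i : V) : V → ℝ := fun j => if j = i then 1 else 0

/-- Symmetric edge polytope of type A: `conv{±(e_i - e_j) : {i,j} ∈ E(G)}`. -/
def symEdgeA [DecidableEq V] (G : SimpleGraph V) : Set (V → ℝ) :=
  convexHull ℝ {v | ∃ i j, G.Adj i j ∧ v = unitVec i - unitVec j}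

/-- The polytope `B_G = conv({0, e_1, …, e_d} ∪ {e_i + e_j : {i,j} ∈ E(G)})`. -/
def typeBBase [DecidableEq V] (G : SimpleGraph V) : Set (V → ℝ) :=
  convexHull ℝ ({0} ∪ {v | ∃ i, v = unitVec i} ∪
    {v | ∃ i j, G.Adj i j ∧ v = unitVec i + unitVec j})

/-- Symmetric edge polytope of type B: `𝓑_G = (B_G)^±`. -/
def symEdgeB [DecidableEq V] (G : SimpleGraph V) : Set (V → ℝ) := uncond (typeBBase G)

/-- The suspension of a graph on `Fin d`: a new vertex joined to all old vertices. -/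
def suspension {d : ℕ} (G : SimpleGraph (Fin d)) : SimpleGraph (Fin (d + 1)) :=
  SimpleGraph.fromRel (fun a b =>
    (∃ p q : Fin d, G.Adj p q ∧ a = p.castSucc ∧ b = q.castSucc) ∨
      (a ≠ Fin.last d ∧ b = Fin.last d))

/-- The cut `E_S` of `G`, as a spanning subgraph of `G`. -/
def cutGraph [DecidableEq V] (G : SimpleGraph V) (S : Finset V) : SimpleGraph V :=
  SimpleGraph.fromRel (fun a b => G.Adj a b ∧ ((a ∈ S) ↔ (b ∉ S)))

/-- Contraction of the edge `{i,j}`: merge `j` into `i` (the vertex `j` becomes isolated,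
so that the resulting polytopes are the same as for the contracted graph on `d-1` vertices). -/
def contractEdge {d : ℕ} (G : SimpleGraph (Fin d)) (i j : Fin d) : SimpleGraph (Fin d) :=
  SimpleGraph.fromRel (fun a b => a ≠ j ∧ b ≠ j ∧
    (G.Adj a b ∨ (a = i ∧ G.Adj j b) ∨ (b = i ∧ G.Adj a j)))

/-- The graph `G̃` attached to a bipartite graph `G` with bipartition `V₁ ∪ V₁ᶜ`. -/
def tildeGraph {d : ℕ} (G : SimpleGraph (Fin d)) (V1 : Finset (Fin d)) :
    SimpleGraph (Fin (d + 2)) :=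
  SimpleGraph.fromRel (fun a b =>
    (∃ p q : Fin d, G.Adj p q ∧ a = p.castSucc.castSucc ∧ b = q.castSucc.castSucc) ∨
    (∃ p ∈ V1, a = (p.castSucc.castSucc : Fin (d + 2)) ∧ b = (⟨d, by omega⟩ : Fin (d + 2))) ∨
    (∃ p : Fin d, p ∉ V1 ∧ a = p.castSucc.castSucc ∧ b = (⟨d + 1, by omega⟩ : Fin (d + 2))) ∨
    (a = (⟨d, by omega⟩ : Fin (d + 2)) ∧ b = (⟨d + 1, by omega⟩ : Fin (d + 2))))

/-- Unimodular (lattice) equivalence of polytopes. -/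
def UnimodEquiv {n m : ℕ} (P : Set (Fin n → ℝ)) (Q : Set (Fin m → ℝ)) : Prop :=
  ∃ (f : (Fin n → ℝ) →ᵃ[ℝ] (Fin m → ℝ)) (g : (Fin m → ℝ) →ᵃ[ℝ] (Fin n → ℝ)),
    f '' P = Q ∧ g '' Q = P ∧ (∀ x ∈ P, g (f x) = x) ∧ (∀ y ∈ Q, f (g y) = y) ∧
    (∀ x, IsLatticePoint x → IsLatticePoint (f x)) ∧
    (∀ y, IsLatticePoint y → IsLatticePoint (g y))

/-- A subgraph is 2-connected: connected, and still connected after deleting any vertex. -/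
def TwoConnSub {G : SimpleGraph V} (B : G.Subgraph) : Prop :=
  B.Connected ∧ ∀ v ∈ B.verts, (B.deleteVerts {v}).Connected

/-- A block (2-connected component) of `G`: a maximal 2-connected subgraph. -/
def IsBlock (G : SimpleGraph V) (B : G.Subgraph) : Prop :=
  TwoConnSub B ∧ ∀ B' : G.Subgraph, B ≤ B' → TwoConnSub B' → B' = B

/-- The coordinate projection `π_J` of a subset of `ℝ^d` onto `ℝ^{|J|}`. -/
def projSet {d : ℕ} (J : Finset (Fin d)) (P : Set (Fin d → ℝ)) : Set (Fin J.card → ℝ) :=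
  (fun (x : Fin d → ℝ) (k : Fin J.card) => x (J.orderEmbOfFin rfl k)) '' P

section Posets

variable {d : ℕ}

/-- `A` is an antichain of the poset `P` on `Fin d`. -/
def IsPosetAntichain (P : PartialOrder (Fin d)) (A : Finset (Fin d)) : Prop :=
  ∀ i ∈ A, ∀ j ∈ A, i ≠ j → ¬ P.lt i j ∧ ¬ P.lt j i

/-- The chain polytope of a poset on `Fin d`. -/
def chainPoly (P : PartialOrder (Fin d)) : Set (Fin d → ℝ) :=
  convexHull ℝ {x | ∃ A : Finset (Fin d), IsPosetAntichain P A ∧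
    x = fun i => if i ∈ A then (1 : ℝ) else 0}

/-- The enriched chain polytope `C_P^(e) = (C_P)^±`. -/
def enrichedChainPoly (P : PartialOrder (Fin d)) : Set (Fin d → ℝ) := uncond (chainPoly P)

/-- The twinned chain polytope `C_{P,Q} = conv(C_P ∪ -C_Q)`. -/
def twinnedChainPoly (P Q : PartialOrder (Fin d)) : Set (Fin d → ℝ) :=
  convexHull ℝ (chainPoly P ∪ -(chainPoly Q))

/-- The order polytope of a poset on `Fin d`. -/
def orderPoly (P : PartialOrder (Fin d)) : Set (Fin d → ℝ) :=
  {x | (∀ i, 0 ≤ x i ∧ x i ≤ 1) ∧ ∀ i j, P.lt i j → x i ≤ x j}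

/-- A poset on `Fin d` is naturally labeled. -/
def NaturallyLabeled (P : PartialOrder (Fin d)) : Prop := ∀ i j, P.lt i j → i < j

/-- `π` (as a listing `π 0, π 1, …`) is a linear extension of `P`. -/
def IsLinearExtension (P : PartialOrder (Fin d)) (π : Fin d → Fin d) : Prop :=
  Function.Bijective π ∧ ∀ a b, P.lt (π a) (π b) → a < b

/-- The sequence of (1-based) labels of the listing `π`, with sentinel `π_0 = 0`. -/
def seqOf (π : Fin d → Fin d) (k : ℕ) : ℕ :=
  if h : 1 ≤ k ∧ k ≤ d then (π ⟨k - 1, by omega⟩).val + 1 else 0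

/-- The number of left peaks of the listing `π`. -/
def leftPeakCount (π : Fin d → Fin d) : ℕ :=
  ((Finset.Icc 1 (d - 1)).filter
    (fun i => seqOf π (i - 1) < seqOf π i ∧ seqOf π (i + 1) < seqOf π i)).card

open scoped Classical in
/-- The left peak polynomial `W_P^(ℓ)(x) = ∑_{π ∈ L(P)} x^{pk^(ℓ)(π)}`. -/
noncomputable def leftPeakPoly (P : PartialOrder (Fin d)) : Polynomial ℝ :=
  ∑ π : Equiv.Perm (Fin d),
    if IsLinearExtension P (π : Fin d → Fin d) then
      Polynomial.X ^ leftPeakCount (π : Fin d → Fin d) else 0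

/-- The strict order of the ordinal sum `P_I ⊕ Q_{Iᶜ}` of induced subposets. -/
def ordinalSumLt (P Q : PartialOrder (Fin d)) (I : Set (Fin d)) (i j : Fin d) : Prop :=
  (i ∈ I ∧ j ∈ I ∧ P.lt i j) ∨ (i ∉ I ∧ j ∉ I ∧ Q.lt i j) ∨ (i ∈ I ∧ j ∉ I)

/-- The polynomial `(x+1)^d f(4x/(x+1)^2)` (for `deg f ≤ d/2`). -/
noncomputable def gammaSub (d : ℕ) (f : Polynomial ℝ) : Polynomial ℝ :=
  ∑ k ∈ Finset.range (d + 1),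
    Polynomial.C (f.coeff k * 4 ^ k) * Polynomial.X ^ k * (1 + Polynomial.X) ^ (d - 2 * k)

/-- The Cayley sum `X * Y ⊂ ℝ^{d+1}`. -/
def cayleySum (X Y : Set (Fin d → ℝ)) : Set (Fin (d + 1) → ℝ) :=
  convexHull ℝ ({z | ∃ x ∈ X, z = Fin.snoc x 0} ∪ {z | ∃ y ∈ Y, z = Fin.snoc y 1})

/-- `Ω(X, Y) = conv((X × {1}) ∪ (−Y × {−1})) ⊂ ℝ^{d+1}`. -/
def omegaSum (X Y : Set (Fin d → ℝ)) : Set (Fin (d + 1) → ℝ) :=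
  convexHull ℝ ({z | ∃ x ∈ X, z = Fin.snoc x 1} ∪ {z | ∃ y ∈ Y, z = -(Fin.snoc y 1)})

/-- `Γ(X, Y) = conv(X ∪ (−Y))`. -/
def gammaSum (X Y : Set (Fin d → ℝ)) : Set (Fin d → ℝ) :=
  convexHull ℝ (X ∪ -Y)

/-- Enriched `(P,Q)`-partition. -/
def IsEnrichedPQPartition (P Q : PartialOrder (Fin d)) (f : Fin d → ℤ) : Prop :=
  (∀ x y, P.lt x y → 0 ≤ f x → 0 ≤ f y → f x ≤ f y) ∧
  (∀ x y, Q.lt x y → f x ≤ 0 → f y ≤ 0 → f y ≤ f x)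

/-- `M(f) = max({0} ∪ f([d]))`. -/
def maxVal (f : Fin d → ℤ) : ℤ :=
  (insert 0 (Finset.image f Finset.univ)).max' (Finset.insert_nonempty _ _)

/-- `m(f) = min({0} ∪ f([d]))`. -/
def minVal (f : Fin d → ℤ) : ℤ :=
  (insert 0 (Finset.image f Finset.univ)).min' (Finset.insert_nonempty _ _)

/-- The number of enriched `(P,Q)`-partitions `f` with `M(f) - m(f) ≤ m`. -/
noncomputable def OmegaPQ (P Q : PartialOrder (Fin d)) (m : ℕ) : ℕ :=
  Set.ncard {f : Fin d → ℤ | IsEnrichedPQPartition P Q f ∧ maxVal f - minVal f ≤ (m : ℤ)}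

end Posets

section Faces

variable [Fintype V]

/-- `F` is a face of `P` (cut out by a supporting linear functional). -/
def IsFace (P F : Set (V → ℝ)) : Prop :=
  ∃ (c : V → ℝ) (b : ℝ), (∀ x ∈ P, ∑ i, c i * x i ≤ b) ∧ F = {x ∈ P | ∑ i, c i * x i = b}

/-- `F` is a facet of `P`: a face of dimension `dim P - 1`. -/
def IsFacet (P F : Set (V → ℝ)) : Prop :=
  IsFace P F ∧ polyDim F + 1 = polyDim P

/-- `F` is a simplex: the convex hull of affinely independent points. -/
def IsSimplexSet (F : Set (V → ℝ)) : Prop :=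
  ∃ S : Finset (V → ℝ), AffineIndependent ℝ (fun v : S => (v : V → ℝ)) ∧
    F = convexHull ℝ (S : Set (V → ℝ))

end Faces

end ABP

open ABP


section Helpers

private lemma convex_comb3 {E : Type*} [AddCommGroup E] [Module ℝ E] {C : Set E}
    (hC : Convex ℝ C) {p q r : E} (hp : p ∈ C) (hq : q ∈ C) (hr : r ∈ C)
    {a b c : ℝ} (ha : 0 ≤ a) (hb : 0 ≤ b) (hc : 0 ≤ c) (habc : a + b + c = 1) :
    a • p + b • q + c • r ∈ C := by
  by_cases hbc : b + c = 0
  · have hb0 : b = 0 := by linarith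
    have hc0 : c = 0 := by linarith
    have ha1 : a = 1 := by linarith
    simpa [hb0, hc0, ha1] using hp
  · have hbc' : 0 < b + c := lt_of_le_of_ne (by linarith) (Ne.symm hbc)
    have hy : (b / (b + c)) • q + (c / (b + c)) • r ∈ C :=
      hC hq hr (div_nonneg hb hbc'.le) (div_nonneg hc hbc'.le) (by field_simp)
    have hx : a • p + (b + c) • ((b / (b + c)) • q + (c / (b + c)) • r) ∈ C :=
      hC hp hy ha hbc'.le (by linarith)
    have h1 : (b + c) * (b / (b + c)) = b := by field_simp
    have h2 : (b + c) * (c / (b + c)) = c := by field_simp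
    rw [smul_add, smul_smul, smul_smul, h1, h2, ← add_assoc] at hx
    exact hx

private lemma aux_union {E : Type*} [AddCommGroup E] [Module ℝ E] {W : Set E}
    (hW : W.Nonempty) (h0 : (0 : E) ∈ convexHull ℝ W) (e : E) :
    convexHull ℝ (insert e (insert (-e) W)) ⊆
      convexHull ℝ (insert (-e) W) ∪ convexHull ℝ (insert e W) := by
  intro x hx
  rw [convexHull_insert (Set.insert_nonempty _ _), mem_convexJoin] at hx
  obtain ⟨e', he', z, hz, hxseg⟩ := hx
  rw [Set.mem_singleton_iff] at he'
  rw [convexHull_insert hW, mem_convexJoin] at hz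
  obtain ⟨e'', he'', w, hw, hzseg⟩ := hz
  rw [Set.mem_singleton_iff] at he''
  obtain ⟨a, b, ha, hb, hab, hx⟩ := hxseg
  obtain ⟨c, f, hc, hf, hcf, hz⟩ := hzseg
  rw [he'] at hx
  rw [he''] at hz
  have hbcf : b * c + b * f = b := by rw [← mul_add, hcf, mul_one]
  rcases le_total a (b * c) with hle | hle
  · left
    have hxe : x = (b * c - a) • (-e) + (2 * a) • (0 : E) + (b * f) • w := by
      rw [← hx, ← hz]; module
    rw [hxe]
    exact convex_comb3 (convex_convexHull ℝ _)
      (subset_convexHull ℝ _ (Set.mem_insert _ _))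
      (convexHull_mono (Set.subset_insert _ _) h0)
      (convexHull_mono (Set.subset_insert _ _) hw)
      (by linarith) (by linarith) (by positivity) (by linarith)
  · right
    have hxe : x = (a - b * c) • e + (2 * (b * c)) • (0 : E) + (b * f) • w := by
      rw [← hx, ← hz]; module
    rw [hxe]
    exact convex_comb3 (convex_convexHull ℝ _)
      (subset_convexHull ℝ _ (Set.mem_insert _ _))
      (convexHull_mono (Set.subset_insert _ _) h0)
      (convexHull_mono (Set.subset_insert _ _) hw)
      (by linarith) (by positivity) (by positivity) (by linarith)

private lemma aux_inter {E : Type*} [AddCommGroup E] [Module ℝ E] {W : Set E}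
    (hW : W.Nonempty) (h0 : (0 : E) ∈ convexHull ℝ W) (e : E) :
    convexHull ℝ (insert (-e) W) ∩ convexHull ℝ (insert e W) ⊆ convexHull ℝ W := by
  rintro x ⟨hx1, hx2⟩
  rw [convexHull_insert hW, mem_convexJoin] at hx1 hx2
  obtain ⟨e1, he1, u, hu, hs1⟩ := hx1
  rw [Set.mem_singleton_iff] at he1
  obtain ⟨e2, he2, v, hv, hs2⟩ := hx2
  rw [Set.mem_singleton_iff] at he2
  obtain ⟨a, a', ha, ha', haa, hxu⟩ := hs1
  obtain ⟨b, b', hb, hb', hbb, hxv⟩ := hs2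
  rw [he1] at hxu
  rw [he2] at hxv
  by_cases ha0 : a = 0
  · have : a' = 1 := by linarith
    rw [ha0, this, zero_smul, one_smul, zero_add] at hxu
    exact hxu ▸ hu
  by_cases hb0 : b = 0
  · have : b' = 1 := by linarith
    rw [hb0, this, zero_smul, one_smul, zero_add] at hxv
    exact hxv ▸ hv
  have hapos : 0 < a := lt_of_le_of_ne ha (Ne.symm ha0)
  have hbpos : 0 < b := lt_of_le_of_ne hb (Ne.symm hb0)
  have hs : (0 : ℝ) < a + b := by linarith
  have key : (a + b) • x = (b * a') • u + (a * b') • v := by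
    have h1 : b • x = b • (a • (-e) + a' • u) := by rw [hxu]
    have h2 : a • x = a • (b • e + b' • v) := by rw [hxv]
    calc (a + b) • x = b • x + a • x := by module
      _ = b • (a • (-e) + a' • u) + a • (b • e + b' • v) := by rw [h1, h2]
      _ = (b * a') • u + (a * b') • v := by module
  have hxw : x = ((a + b)⁻¹ * (b * a')) • u + ((a + b)⁻¹ * (a * b')) • v := by
    have h5 := congrArg (fun y : E => (a + b)⁻¹ • y) key
    simp only [smul_add, smul_smul, inv_smul_smul₀ hs.ne'] at h5
    exact h5
  have hxw3 : x = ((a + b)⁻¹ * (b * a')) • u + ((a + b)⁻¹ * (a * b')) • v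
      + ((a + b)⁻¹ * (2 * a * b)) • (0 : E) := by
    rw [smul_zero, add_zero]; exact hxw
  rw [hxw3]
  refine convex_comb3 (convex_convexHull ℝ _) hu hv h0 (by positivity) (by positivity)
    (by positivity) ?_
  have hsum : (a + b)⁻¹ * (b * a') + (a + b)⁻¹ * (a * b') + (a + b)⁻¹ * (2 * a * b)
      = (a + b)⁻¹ * (b * a' + a * b' + 2 * a * b) := by ring
  rw [hsum]
  have : b * a' + a * b' + 2 * a * b = a + b := by linear_combination b * haa + a * hbb
  rw [this, inv_mul_cancel₀ hs.ne']

end Helpers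

section MainProof
open ABP

private lemma unitVec_sub_inj {d : ℕ} {k l k' l' : Fin d} (hkl : k ≠ l) (hk'l' : k' ≠ l')
    (h : (unitVec k - unitVec l : Fin d → ℝ) = unitVec k' - unitVec l') :
    k = k' ∧ l = l' := by
  have hkk : k = k' := by
    by_contra hne
    have hk := congrFun h k
    simp [unitVec, hkl, hne] at hk
    split_ifs at hk <;> norm_num at hk
  subst hkk
  have hll : l = l' := by
    by_contra hne
    have hl := congrFun h l
    simp [unitVec, Ne.symm hkl, hne] at hl
  exact ⟨rfl, hll⟩

private lemma vs_hull {d : ℕ} (s : Set (Fin d → ℝ)) :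
    vectorSpan ℝ (convexHull ℝ s) = vectorSpan ℝ s := by
  rw [← direction_affineSpan, affineSpan_convexHull, direction_affineSpan]

end MainProof

open ABP

/-- Lemma: deleting one of the two orientations of a non-bridge edge.
If `e = {i,j}` is not a bridge of the connected graph `G`, and `P_e` is the convex hull
of `A(G) ∖ {e_i - e_j}`, then `h*(P_e, x) = (1/2)(h*(A_G, x) + h*(A_{G∖e}, x))`. -/
theorem hstar_delete_one_orientation {d : ℕ} (G : SimpleGraph (Fin d))
    (hconn : G.Connected) (i j : Fin d) (hij : G.Adj i j)
    (hbridge : ¬ G.IsBridge s(i, j))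
    (hPe : Polynomial ℝ)
    (hhPe : IsHStar (convexHull ℝ
      ({v | ∃ k l, G.Adj k l ∧ v = unitVec k - unitVec l} \ {unitVec i - unitVec j})) hPe)
    (hG : Polynomial ℝ) (hhG : IsHStar (symEdgeA G) hG)
    (hGe : Polynomial ℝ) (hhGe : IsHStar (symEdgeA (G.deleteEdges {s(i, j)})) hGe) :
    hPe = Polynomial.C ((1 : ℝ) / 2) * (hG + hGe) := by
  classical
  set G' := G.deleteEdges {s(i, j)} with hG'def
  set VG : Set (Fin d → ℝ) := {v | ∃ k l, G.Adj k l ∧ v = unitVec k - unitVec l} with hVGdef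
  set W : Set (Fin d → ℝ) := {v | ∃ k l, G'.Adj k l ∧ v = unitVec k - unitVec l} with hWdef
  set e0 : Fin d → ℝ := unitVec i - unitVec j with he0def
  set Pe : Set (Fin d → ℝ) := convexHull ℝ (VG \ {e0}) with hPedef
  set Pne : Set (Fin d → ℝ) := convexHull ℝ (VG \ {-e0}) with hPnedef
  have hijne : i ≠ j := hij.ne
  -- Reachability in G'
  have hreach : G'.Reachable i j := by
    rw [SimpleGraph.isBridge_iff] at hbridge
    push_neg at hbridge
    exact hbridge
  obtain ⟨p0⟩ := hreach
  have hreach : G'.Reachable i j := ⟨p0⟩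
  -- an edge of G'
  obtain ⟨k0, l0, hk0l0⟩ : ∃ k l, G'.Adj k l := by
    cases p0 with
    | nil => exact absurd hij (G.irrefl)
    | cons h q => exact ⟨_, _, h⟩
  have hv0W : (unitVec k0 - unitVec l0 : Fin d → ℝ) ∈ W := ⟨k0, l0, hk0l0, rfl⟩
  have hv0W' : (unitVec l0 - unitVec k0 : Fin d → ℝ) ∈ W := ⟨l0, k0, hk0l0.symm, rfl⟩
  have hWne : W.Nonempty := ⟨_, hv0W⟩
  -- 0 in the hull of W
  have h0W : (0 : Fin d → ℝ) ∈ convexHull ℝ W := by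
    have hmid := (convex_convexHull ℝ W) (subset_convexHull ℝ W hv0W)
      (subset_convexHull ℝ W hv0W') (by norm_num : (0:ℝ) ≤ 1/2)
      (by norm_num : (0:ℝ) ≤ 1/2) (by norm_num)
    have hz : ((1:ℝ)/2) • (unitVec k0 - unitVec l0 : Fin d → ℝ)
        + ((1:ℝ)/2) • (unitVec l0 - unitVec k0) = 0 := by module
    rwa [hz] at hmid
  -- basic membership facts
  have hWsubVG : W ⊆ VG := by
    rintro v ⟨k, l, h, rfl⟩
    exact ⟨k, l, (SimpleGraph.deleteEdges_adj.mp h).1, rfl⟩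
  have he0VG : e0 ∈ VG := ⟨i, j, hij, rfl⟩
  have hne0VG : -e0 ∈ VG := ⟨j, i, hij.symm, by rw [he0def, neg_sub]⟩
  have he0W : e0 ∉ W := by
    rintro ⟨k, l, h, heq⟩
    have hadj := SimpleGraph.deleteEdges_adj.mp h
    obtain ⟨rfl, rfl⟩ := unitVec_sub_inj hadj.1.ne hijne heq.symm
    exact hadj.2 rfl
  have hne0W : -e0 ∉ W := by
    rintro ⟨k, l, h, heq⟩
    have hadj := SimpleGraph.deleteEdges_adj.mp h
    have heq' : (unitVec k - unitVec l : Fin d → ℝ) = unitVec j - unitVec i := by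
      rw [← heq, he0def, neg_sub]
    obtain ⟨rfl, rfl⟩ := unitVec_sub_inj hadj.1.ne (Ne.symm hijne) heq'
    exact hadj.2 (Sym2.eq_swap)
  have he0ne : e0 ≠ -e0 := by
    intro h
    have hi := congrFun h i
    rw [he0def] at hi
    simp [unitVec, hijne] at hi
    norm_num at hi
  -- decomposition of the vertex set
  have hdecomp : VG = insert e0 (insert (-e0) W) := by
    ext v
    constructor
    · rintro ⟨k, l, hkl, rfl⟩
      by_cases h1 : s(k, l) = s(i, j)
      · rw [Sym2.eq_iff] at h1
        rcases h1 with ⟨rfl, rfl⟩ | ⟨rfl, rfl⟩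
        · exact Set.mem_insert _ _
        · refine Set.mem_insert_of_mem _ (Set.mem_insert_iff.mpr (Or.inl ?_))
          rw [he0def, neg_sub]
      · exact Set.mem_insert_of_mem _ (Set.mem_insert_of_mem _
          ⟨k, l, SimpleGraph.deleteEdges_adj.mpr ⟨hkl, by simpa using h1⟩, rfl⟩)
    · intro hv
      rcases Set.mem_insert_iff.mp hv with rfl | hv
      · exact he0VG
      rcases Set.mem_insert_iff.mp hv with rfl | hv
      · exact hne0VG
      · exact hWsubVG hv
  have hWsubPe : W ⊆ VG \ {e0} := by
    intro v hv
    exact ⟨hWsubVG hv, fun h => he0W (Set.mem_singleton_iff.mp h ▸ hv)⟩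
  have hWsubPne : W ⊆ VG \ {-e0} := by
    intro v hv
    exact ⟨hWsubVG hv, fun h => hne0W (Set.mem_singleton_iff.mp h ▸ hv)⟩
  have hPeSet : VG \ {e0} = insert (-e0) W := by
    ext v
    constructor
    · rintro ⟨hvVG, hvne⟩
      rw [Set.mem_singleton_iff] at hvne
      rw [hdecomp] at hvVG
      rcases Set.mem_insert_iff.mp hvVG with rfl | hv
      · exact absurd rfl hvne
      · exact hv
    · intro hv
      rcases Set.mem_insert_iff.mp hv with rfl | hv
      · exact ⟨hne0VG, fun h => he0ne (Set.mem_singleton_iff.mp h).symm⟩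
      · exact hWsubPe hv
  have hPneSet : VG \ {-e0} = insert e0 W := by
    ext v
    constructor
    · rintro ⟨hvVG, hvne⟩
      rw [Set.mem_singleton_iff] at hvne
      rw [hdecomp] at hvVG
      rcases Set.mem_insert_iff.mp hvVG with rfl | hv
      · exact Set.mem_insert _ _
      rcases Set.mem_insert_iff.mp hv with rfl | hv
      · exact absurd rfl hvne
      · exact Set.mem_insert_of_mem _ hv
    · intro hv
      rcases Set.mem_insert_iff.mp hv with rfl | hv
      · exact ⟨he0VG, fun h => he0ne (Set.mem_singleton_iff.mp h)⟩
      · exact hWsubPne hv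
  -- negation symmetry
  have hVGneg : ∀ v, v ∈ VG → -v ∈ VG := by
    rintro v ⟨k, l, hkl, rfl⟩
    exact ⟨l, k, hkl.symm, by rw [neg_sub]⟩
  have hnegdiff : VG \ {-e0} = -(VG \ {e0}) := by
    ext v
    rw [Set.mem_neg, Set.mem_diff, Set.mem_diff, Set.mem_singleton_iff, Set.mem_singleton_iff]
    constructor
    · rintro ⟨hv, hvne⟩
      refine ⟨hVGneg v hv, fun h => hvne ?_⟩
      rw [← h, neg_neg]
    · rintro ⟨hv, hvne⟩
      have := hVGneg _ hv
      rw [neg_neg] at this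
      refine ⟨this, fun h => hvne ?_⟩
      rw [h, neg_neg]
  have hPneg : Pne = -Pe := by
    rw [hPnedef, hPedef, hnegdiff, convexHull_neg]
  -- union and intersection identities
  have hU : convexHull ℝ VG = Pe ∪ Pne := by
    apply Set.Subset.antisymm
    · rw [hPedef, hPnedef, hPeSet, hPneSet, hdecomp]
      exact aux_union hWne h0W e0
    · exact Set.union_subset (convexHull_mono Set.diff_subset) (convexHull_mono Set.diff_subset)
  have hI : convexHull ℝ W = Pe ∩ Pne := by
    apply Set.Subset.antisymm
    · exact Set.subset_inter (convexHull_mono hWsubPe) (convexHull_mono hWsubPne)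
    · rw [hPedef, hPnedef, hPeSet, hPneSet]
      exact aux_inter hWne h0W e0
  have hAGdef : symEdgeA G = convexHull ℝ VG := rfl
  have hAGedef : symEdgeA G' = convexHull ℝ W := rfl
  -- vector span equalities
  have hWN : ∀ v ∈ W, v ∈ vectorSpan ℝ W := by
    rintro v ⟨k, l, hkl, rfl⟩
    have hmem2 : (unitVec k - unitVec l : Fin d → ℝ) -ᵥ (unitVec l - unitVec k)
        ∈ vectorSpan ℝ W :=
      vsub_mem_vectorSpan ℝ ⟨k, l, hkl, rfl⟩ ⟨l, k, hkl.symm, rfl⟩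
    have hkey : (unitVec k - unitVec l : Fin d → ℝ)
        = (2⁻¹ : ℝ) • ((unitVec k - unitVec l) -ᵥ (unitVec l - unitVec k)) := by
      rw [vsub_eq_sub]; module
    rw [hkey]
    exact Submodule.smul_mem _ _ hmem2
  have hwalkN : ∀ (a b : Fin d) (p : G'.Walk a b),
      (unitVec a - unitVec b : Fin d → ℝ) ∈ vectorSpan ℝ W := by
    intro a b p
    induction p with
    | nil => rw [sub_self]; exact Submodule.zero_mem _
    | cons h q ih =>
      have h1 := hWN _ ⟨_, _, h, rfl⟩
      have h2 := Submodule.add_mem _ h1 ih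
      rwa [sub_add_sub_cancel] at h2
  have hVGN : ∀ v ∈ VG, v ∈ vectorSpan ℝ W := by
    rintro v ⟨k, l, hkl, rfl⟩
    by_cases h1 : s(k, l) = s(i, j)
    · rw [Sym2.eq_iff] at h1
      rcases h1 with ⟨rfl, rfl⟩ | ⟨rfl, rfl⟩
      · exact hwalkN _ _ p0
      · exact hwalkN _ _ p0.reverse
    · exact hWN _ ⟨k, l, SimpleGraph.deleteEdges_adj.mpr ⟨hkl, by simpa using h1⟩, rfl⟩
  have hle : vectorSpan ℝ VG ≤ vectorSpan ℝ W := by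
    rw [vectorSpan_def]
    apply Submodule.span_le.mpr
    rintro x hx
    rw [Set.mem_vsub] at hx
    obtain ⟨a, ha, b, hb, rfl⟩ := hx
    rw [vsub_eq_sub]
    exact Submodule.sub_mem _ (hVGN a ha) (hVGN b hb)
  have hEqW : vectorSpan ℝ W = vectorSpan ℝ VG :=
    le_antisymm (vectorSpan_mono ℝ hWsubVG) hle
  have hEqPe : vectorSpan ℝ (VG \ {e0}) = vectorSpan ℝ VG :=
    le_antisymm (vectorSpan_mono ℝ Set.diff_subset)
      (le_trans hle (vectorSpan_mono ℝ hWsubPe))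
  -- dimension equalities
  have hdimPe : polyDim Pe = polyDim (symEdgeA G) := by
    show Module.finrank ℝ (vectorSpan ℝ Pe) = Module.finrank ℝ (vectorSpan ℝ (symEdgeA G))
    rw [hAGdef, hPedef, vs_hull, vs_hull, hEqPe]
  have hdimGe : polyDim (symEdgeA G') = polyDim (symEdgeA G) := by
    show Module.finrank ℝ (vectorSpan ℝ (symEdgeA G'))
        = Module.finrank ℝ (vectorSpan ℝ (symEdgeA G))
    rw [hAGdef, hAGedef, vs_hull, vs_hull, hEqW]
  -- lattice point counting
  have hcount : ∀ m : ℕ, m ≠ 0 →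
      latticeCount (symEdgeA G) m + latticeCount (symEdgeA G') m
        = 2 * latticeCount Pe m := by
    intro m hm
    have hc : ((m : ℝ)) ≠ 0 := Nat.cast_ne_zero.mpr hm
    set LPe := {x : Fin d → ℤ | (fun t => (x t : ℝ)) ∈ (m : ℝ) • Pe} with hLPedef
    set LPne := {x : Fin d → ℤ | (fun t => (x t : ℝ)) ∈ (m : ℝ) • Pne} with hLPnedef
    have hVGbox : convexHull ℝ VG ⊆ Set.univ.pi (fun _ : Fin d => Set.Icc (-1:ℝ) 1) := by
      apply convexHull_min
      · rintro v ⟨k, l, hkl, rfl⟩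
        rw [Set.mem_pi]
        intro t _
        simp only [Set.mem_Icc, Pi.sub_apply, unitVec]
        constructor <;> split_ifs <;> norm_num
      · exact convex_pi fun t _ => convex_Icc _ _
    have hfin : ∀ P : Set (Fin d → ℝ), P ⊆ convexHull ℝ VG →
        {x : Fin d → ℤ | (fun t => (x t : ℝ)) ∈ (m : ℝ) • P}.Finite := by
      intro P hP
      apply Set.Finite.subset (Set.Finite.pi fun _ : Fin d => Set.finite_Icc (-(m:ℤ)) m)
      intro x hx
      rw [Set.mem_setOf_eq, Set.mem_smul_set] at hx
      obtain ⟨y, hy, hyx⟩ := hx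
      have hybox := hVGbox (hP hy)
      rw [Set.mem_pi] at hybox
      rw [Set.mem_pi]
      intro t _
      have h1 : (x t : ℝ) = m * y t := by
        have := congrFun hyx t
        simpa [smul_eq_mul] using this.symm
      have h2 := hybox t (Set.mem_univ t)
      rw [Set.mem_Icc] at h2
      rw [Set.mem_Icc]
      have hm0 : (0:ℝ) ≤ m := Nat.cast_nonneg m
      constructor
      · have hr : -(m : ℝ) ≤ (x t : ℝ) := by rw [h1]; nlinarith [h2.1, h2.2]
        exact_mod_cast hr
      · have hr : (x t : ℝ) ≤ m := by rw [h1]; nlinarith [h2.1, h2.2]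
        exact_mod_cast hr
    have hfinPe : LPe.Finite := hfin Pe (by rw [hPedef]; exact convexHull_mono Set.diff_subset)
    have hfinPne : LPne.Finite := hfin Pne (by rw [hPnedef]; exact convexHull_mono Set.diff_subset)
    have hLG : {x : Fin d → ℤ | (fun t => (x t : ℝ)) ∈ (m : ℝ) • symEdgeA G} = LPe ∪ LPne := by
      ext x
      rw [Set.mem_setOf_eq, hAGdef, hU, Set.smul_set_union, Set.mem_union]
      rfl
    have hLGe : {x : Fin d → ℤ | (fun t => (x t : ℝ)) ∈ (m : ℝ) • symEdgeA G'} = LPe ∩ LPne := by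
      ext x
      rw [Set.mem_setOf_eq, hAGedef, hI, Set.smul_set_inter₀ hc, Set.mem_inter_iff]
      rfl
    have hiff : ∀ x : Fin d → ℤ, x ∈ LPne ↔ (-x) ∈ LPe := by
      intro x
      rw [hLPnedef, hLPedef, Set.mem_setOf_eq, Set.mem_setOf_eq, hPneg,
        Set.smul_set_neg, Set.mem_neg]
      have hfun : -(fun t => ((x t : ℝ))) = (fun t => (((-x) t : ℝ))) := by
        funext t
        simp
      rw [hfun]
    have hLneg : LPne = Neg.neg '' LPe := by
      ext x
      rw [hiff x, Set.mem_image]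
      constructor
      · intro h
        exact ⟨-x, h, neg_neg x⟩
      · rintro ⟨y, hy, rfl⟩
        rwa [neg_neg]
    have hcards : LPne.ncard = LPe.ncard := by
      rw [hLneg, Set.ncard_image_of_injective _ neg_injective]
    have hmain := Set.ncard_union_add_ncard_inter LPe LPne hfinPe hfinPne
    have e1 : latticeCount (symEdgeA G) m = (LPe ∪ LPne).ncard := by
      unfold ABP.latticeCount
      rw [hLG]
    have e2 : latticeCount (symEdgeA G') m = (LPe ∩ LPne).ncard := by
      unfold ABP.latticeCount
      rw [hLGe]
    have e3 : latticeCount Pe m = LPe.ncard := rfl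
    rw [e1, e2, e3]
    omega
  -- power series assembly
  unfold ABP.IsHStar at hhPe hhG hhGe
  rw [hdimPe] at hhPe
  rw [hdimGe] at hhGe
  have key : (PowerSeries.mk fun m => if m = 0 then (1:ℝ) else (latticeCount (symEdgeA G) m : ℝ))
      + (PowerSeries.mk fun m => if m = 0 then (1:ℝ) else (latticeCount (symEdgeA G') m : ℝ))
      = PowerSeries.C (2:ℝ)
        * PowerSeries.mk (fun m => if m = 0 then (1:ℝ) else (latticeCount Pe m : ℝ)) := by
    ext n
    rw [map_add, PowerSeries.coeff_C_mul, PowerSeries.coeff_mk, PowerSeries.coeff_mk,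
      PowerSeries.coeff_mk]
    by_cases hn : n = 0
    · simp [hn]
      norm_num
    · rw [if_neg hn, if_neg hn, if_neg hn]
      have := hcount n hn
      have hcast : ((latticeCount (symEdgeA G) n : ℝ)) + (latticeCount (symEdgeA G') n : ℝ)
          = 2 * (latticeCount Pe n : ℝ) := by exact_mod_cast this
      exact hcast
  have final : ((Polynomial.C (2:ℝ) * hPe : Polynomial ℝ) : PowerSeries ℝ)
      = ((hG + hGe : Polynomial ℝ) : PowerSeries ℝ) := by
    rw [Polynomial.coe_mul, Polynomial.coe_C, Polynomial.coe_add, ← hhG, ← hhGe, ← hhPe,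
      ← add_mul, key, mul_assoc]
  have heq2 : Polynomial.C (2:ℝ) * hPe = hG + hGe := Polynomial.coe_inj.mp final
  rw [← heq2, ← mul_assoc, ← Polynomial.C_mul]
  norm_num
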